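/- Let ρ : 𝓧 → ℝ be a convex risk measure on a model space 𝓧. Then ρ is representable (ρ(x) = sup{E[x y] − ρ^#(y) : y ∈ 𝓧^#} for all x ∈ 𝓧) if and only if ρ is lower semicontinuous with respect to the weak topology σ(𝓧, 𝓧^#). -/

import Mathlib

open MeasureTheory Filter Topology
open scoped ENNReal Topology

variable {Ω : Type*}

/-- A model space: a solid linear subspace of `L⁰(𝓔)` consisting of integrable
functions and containing the (classes of) constant functions. -/
def IsModelSpace [MeasurableSpace Ω] (P : Measure Ω) (X : Set (Ω → ℝ)) : Prop :=
  (∀ x ∈ X, Measurable x) ∧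
  (∀ x ∈ X, ∀ y ∈ X, x + y ∈ X) ∧
  (∀ c : ℝ, ∀ x ∈ X, (fun ω => c * x ω) ∈ X) ∧
  (∀ x y : Ω → ℝ, Measurable x → y ∈ X → (∀ᵐ ω ∂P, |x ω| ≤ |y ω|) → x ∈ X) ∧
  (∀ x ∈ X, Integrable x P) ∧
  (∀ c : ℝ, (fun _ => c) ∈ X)

/-- The Köthe dual `𝓧^#` of a model space. -/
def kotheDual [MeasurableSpace Ω] (P : Measure Ω) (X : Set (Ω → ℝ)) : Set (Ω → ℝ) :=
  {y | Measurable y ∧ ∀ x ∈ X, Integrable (fun ω => x ω * y ω) P}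

/-- A convex risk measure on a model space `X`. -/
def IsConvexRiskMeasure [MeasurableSpace Ω] (P : Measure Ω) (X : Set (Ω → ℝ))
    (ρ : (Ω → ℝ) → ℝ) : Prop :=
  (∀ x ∈ X, ∀ y ∈ X, ∀ r : ℝ, 0 ≤ r → r ≤ 1 →
    ρ (fun ω => r * x ω + (1 - r) * y ω) ≤ r * ρ x + (1 - r) * ρ y) ∧
  (∀ x ∈ X, ∀ y ∈ X, (∀ᵐ ω ∂P, x ω ≤ y ω) → ρ y ≤ ρ x) ∧
  (∀ x ∈ X, ∀ r : ℝ, ρ (fun ω => x ω + r) = ρ x - r)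

/-- The Fenchel transform `ρ^#(y) = sup {E[x y] - ρ(x) : x ∈ X}`, with values in
the extended reals. -/
noncomputable def fenchel [MeasurableSpace Ω] (P : Measure Ω) (X : Set (Ω → ℝ))
    (ρ : (Ω → ℝ) → ℝ) (y : Ω → ℝ) : EReal :=
  sSup ((fun x => (((∫ ω, x ω * y ω ∂P) - ρ x : ℝ) : EReal)) '' X)

/-- `ρ` is representable over a set `D ⊆ 𝓧^#` of dual variables:
`ρ(x) = sup {E[x y] - ρ^#(y) : y ∈ D}` for all `x ∈ 𝓧`. -/
def IsRepresentableOver [MeasurableSpace Ω] (P : Measure Ω) (X : Set (Ω → ℝ))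
    (ρ : (Ω → ℝ) → ℝ) (D : Set (Ω → ℝ)) : Prop :=
  ∀ x ∈ X, (ρ x : EReal) =
    sSup ((fun y => (((∫ ω, x ω * y ω ∂P : ℝ)) : EReal) - fenchel P X ρ y) '' D)

/-- The weak topology `σ(A, B)` on (the subtype of) `A`: the initial topology induced
by the linear functionals `a ↦ E[a b]`, `b ∈ B`. -/
noncomputable def weakTop [MeasurableSpace Ω] (P : Measure Ω) (A B : Set (Ω → ℝ)) :
    TopologicalSpace A :=
  ⨅ b ∈ B, TopologicalSpace.induced (fun a : A => ∫ ω, (a : Ω → ℝ) ω * b ω ∂P)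
    inferInstance

/-! ### Auxiliary definitions and lemmas -/

section Aux

/-- Every continuous linear functional on `WeakBilin B` is of the form `B · y`. -/
theorem weakBilin_dual {E F : Type*} [AddCommGroup E] [Module ℝ E] [AddCommGroup F] [Module ℝ F]
    (B : E →ₗ[ℝ] F →ₗ[ℝ] ℝ) (g : WeakBilin B →L[ℝ] ℝ) :
    ∃ y : F, ∀ x : E, g x = B x y := by
  have hb := LinearMap.hasBasis_weakBilin B
  have hnhds : g ⁻¹' (Metric.ball (0:ℝ) 1) ∈ 𝓝 (0 : WeakBilin B) := by
    have := g.continuous.continuousAt (x := (0 : WeakBilin B))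
    have h0 : g 0 = 0 := map_zero g
    exact this (by simp [h0, Metric.ball_mem_nhds])
  obtain ⟨U, hU, hUsub⟩ := hb.mem_iff.mp hnhds
  obtain ⟨s, r, hr, rfl⟩ := (SeminormFamily.basisSets_iff _).mp hU
  have hker : ⨅ i : s, LinearMap.ker (B.flip i.1) ≤
      LinearMap.ker (show E →ₗ[ℝ] ℝ from g.toLinearMap) := by
    intro x hx
    simp only [Submodule.mem_iInf, LinearMap.mem_ker, LinearMap.flip_apply] at hx
    have key : ∀ k : ℝ, |k| * |g x| < 1 := by
      intro k
      have hmem : (k • x : WeakBilin B) ∈ (s.sup B.toSeminormFamily).ball 0 r := by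
        rw [Seminorm.mem_ball_zero]
        refine Seminorm.finset_sup_apply_lt hr fun y hy => ?_
        have h0 : B x y = 0 := hx ⟨y, hy⟩
        simp only [LinearMap.toSeminormFamily_apply, _root_.map_smul, LinearMap.smul_apply, h0,
          smul_zero, norm_zero]
        exact hr
      have := hUsub hmem
      replace this : |g (k • x)| < 1 := by
        have h := Metric.mem_ball.mp this; rwa [dist_zero_right, Real.norm_eq_abs] at h
      calc |k| * |g x| = |g (k • x)| := by rw [← abs_mul]; exact congrArg abs (_root_.map_smul g k (x : WeakBilin B)).symm
      _ < 1 := this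
    simp only [LinearMap.mem_ker, ContinuousLinearMap.coe_coe]
    by_contra hgx
    have habs : |g x| ≠ 0 := fun h => hgx (abs_eq_zero.mp h)
    have h1 := key (|g x|)⁻¹
    rw [abs_inv, abs_abs, inv_mul_cancel₀ habs] at h1
    exact lt_irrefl _ h1
  have hspan := mem_span_of_iInf_ker_le_ker (L := fun i : s => B.flip i.1)
    (K := (show E →ₗ[ℝ] ℝ from g.toLinearMap)) hker
  have hrange : Submodule.span ℝ (Set.range fun i : s => B.flip i.1) ≤ LinearMap.range B.flip := by
    rw [Submodule.span_le]
    rintro - ⟨i, rfl⟩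
    exact LinearMap.mem_range_self _ _
  obtain ⟨y, hy⟩ := hrange hspan
  exact ⟨y, fun x => (LinearMap.congr_fun hy x).symm⟩

variable [MeasurableSpace Ω] (P : Measure Ω) (X : Set (Ω → ℝ))

/-- A model space as a submodule. -/
def Msub (hX : IsModelSpace P X) : Submodule ℝ (Ω → ℝ) where
  carrier := X
  add_mem' := fun ha hb => hX.2.1 _ ha _ hb
  zero_mem' := by exact hX.2.2.2.2.2 0
  smul_mem' := fun c x hx => hX.2.2.1 c x hx

/-- The Köthe dual as a submodule. -/
def Dsub : Submodule ℝ (Ω → ℝ) where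
  carrier := kotheDual P X
  add_mem' := fun {a b} ha hb => ⟨ha.1.add hb.1, fun x hx => by
    exact ((ha.2 x hx).add (hb.2 x hx)).congr (ae_of_all _ fun ω => by simp [mul_add])⟩
  zero_mem' := ⟨measurable_const, fun x hx => by simp⟩
  smul_mem' := fun c y hy => ⟨hy.1.const_smul c, fun x hx => by
    have := (hy.2 x hx).const_mul c
    simpa [Pi.smul_apply, smul_eq_mul, mul_left_comm] using this⟩

variable {M D : Submodule ℝ (Ω → ℝ)}

/-- The canonical pairing between a model space and a dual space. -/
noncomputable def pairB (hInt : ∀ x ∈ M, ∀ y ∈ D, Integrable (fun ω => x ω * y ω) P) :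
    ↥M →ₗ[ℝ] ↥D →ₗ[ℝ] ℝ where
  toFun x :=
    { toFun := fun y => ∫ ω, x.1 ω * y.1 ω ∂P
      map_add' := fun y z => by
        have h : (fun ω => x.1 ω * (y.1 + z.1) ω) =
            (fun ω => x.1 ω * y.1 ω + x.1 ω * z.1 ω) := by funext ω; simp [mul_add]
        simp only [Submodule.coe_add, h]
        exact integral_add (hInt _ x.2 _ y.2) (hInt _ x.2 _ z.2)
      map_smul' := fun c y => by
        have h : (fun ω => x.1 ω * (c • y.1) ω) = (fun ω => c * (x.1 ω * y.1 ω)) := by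
          funext ω; simp [smul_eq_mul]; ring
        simp only [Submodule.coe_smul, h, MeasureTheory.integral_const_mul, smul_eq_mul,
          RingHom.id_apply] }
  map_add' := fun x z => by
    ext y
    have h : (fun ω => (x.1 + z.1) ω * y.1 ω) =
        (fun ω => x.1 ω * y.1 ω + z.1 ω * y.1 ω) := by funext ω; simp [add_mul]
    simp only [LinearMap.coe_mk, AddHom.coe_mk, LinearMap.add_apply, Submodule.coe_add, h]
    exact integral_add (hInt _ x.2 _ y.2) (hInt _ z.2 _ y.2)
  map_smul' := fun c x => by
    ext y
    have h : (fun ω => (c • x.1) ω * y.1 ω) = (fun ω => c * (x.1 ω * y.1 ω)) := by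
      funext ω; simp [smul_eq_mul]; ring
    simp only [LinearMap.coe_mk, AddHom.coe_mk, RingHom.id_apply, LinearMap.smul_apply,
      Submodule.coe_smul, h, MeasureTheory.integral_const_mul, smul_eq_mul]

theorem weakTop_eq (hInt : ∀ x ∈ M, ∀ y ∈ D, Integrable (fun ω => x ω * y ω) P) :
    weakTop P (M : Set (Ω → ℝ)) (D : Set (Ω → ℝ)) =
      WeakBilin.instTopologicalSpace (pairB P hInt) := by
  rw [WeakBilin.instTopologicalSpace]
  rw [Pi.topologicalSpace, induced_iInf]
  simp_rw [induced_compose]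
  rw [weakTop, iInf_subtype]
  rfl

/-- The pairing on the product with `ℝ`. -/
noncomputable def prodPair (B : ↥M →ₗ[ℝ] ↥D →ₗ[ℝ] ℝ) :
    (↥M × ℝ) →ₗ[ℝ] (↥D × ℝ) →ₗ[ℝ] ℝ :=
  LinearMap.mk₂ ℝ (fun p q => B p.1 q.1 + p.2 * q.2)
    (fun p p' q => by simp [map_add, add_mul]; ring)
    (fun c p q => by simp [_root_.map_smul, smul_eq_mul]; ring)
    (fun p q q' => by simp [map_add, mul_add]; ring)
    (fun c p q => by simp [_root_.map_smul, smul_eq_mul]; ring)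

end Aux

set_option maxHeartbeats 4000000 in
/-- a convex risk measure is representable iff it is lower semicontinuous
with respect to the weak topology `σ(𝓧, 𝓧^#)`, i.e. all its sublevel sets are
`σ(𝓧, 𝓧^#)`-closed. -/
theorem representable_iff_weakly_lsc [MeasurableSpace Ω] (P : Measure Ω)
    [IsProbabilityMeasure P] (X : Set (Ω → ℝ)) (hX : IsModelSpace P X)
    (ρ : (Ω → ℝ) → ℝ) (hρ : IsConvexRiskMeasure P X ρ) :
    IsRepresentableOver P X ρ (kotheDual P X) ↔
      ∀ r : ℝ, IsClosed[weakTop P X (kotheDual P X)] {x : X | ρ x.1 ≤ r} := by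
  letI := weakTop P X (kotheDual P X)
  constructor
  · -- representable → lsc
    intro hrep r
    have hset : {x : X | ρ x.1 ≤ r} = ⋂ y ∈ kotheDual P X,
        {x : X | ((∫ ω, (x : Ω → ℝ) ω * y ω ∂P : ℝ) : EReal) - fenchel P X ρ y ≤ (r : EReal)} := by
      ext x
      simp only [Set.mem_setOf_eq, Set.mem_iInter]
      constructor
      · intro hx y hy
        refine le_trans ?_ (EReal.coe_le_coe_iff.mpr hx)
        rw [hrep x.1 x.2]
        exact le_sSup ⟨y, hy, rfl⟩
      · intro h
        have : (ρ x.1 : EReal) ≤ (r : EReal) := by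
          rw [hrep x.1 x.2]
          exact sSup_le (by rintro - ⟨y, hy, rfl⟩; exact h y hy)
        exact EReal.coe_le_coe_iff.mp this
    rw [hset]
    refine isClosed_biInter fun y hy => ?_
    rcases hfen : fenchel P X ρ y with _ | _ | c
    · -- fenchel = ⊥ : the set is empty
      convert isClosed_empty
      rw [Set.eq_empty_iff_forall_notMem]
      intro x hx
      simp only [Set.mem_setOf_eq, EReal.coe_sub_bot] at hx
      exact EReal.coe_ne_top r (top_le_iff.mp hx)
    · -- fenchel = ⊤ : the set is everything
      convert isClosed_univ
      rw [Set.eq_univ_iff_forall]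
      intro x
      simp only [Set.mem_setOf_eq, EReal.sub_top]
      exact bot_le
    · -- fenchel = real c
      have hcont : Continuous[weakTop P X (kotheDual P X), _]
          (fun x : X => ∫ ω, (x : Ω → ℝ) ω * y ω ∂P) := by
        rw [continuous_iff_le_induced]
        exact iInf₂_le y hy
      have hEq : {x : X | ((∫ ω, (x : Ω → ℝ) ω * y ω ∂P : ℝ) : EReal) - (c : EReal) ≤ (r : EReal)}
          = {x : X | (∫ ω, (x : Ω → ℝ) ω * y ω ∂P) ≤ r + c} := by
        ext x
        simp only [Set.mem_setOf_eq, ← EReal.coe_sub, EReal.coe_le_coe_iff]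
        constructor
        · intro h; linarith
        · intro h; linarith
      have hcc : ∀ S : Set X, IsClosed S → IsClosed S := fun _ h => h
      refine hcc _ ?_
      have : {x : X | ((∫ ω, (x : Ω → ℝ) ω * y ω ∂P : ℝ) : EReal) - (c : EReal) ≤ (r : EReal)}
          = {x : X | (∫ ω, (x : Ω → ℝ) ω * y ω ∂P) ≤ r + c} := hEq
      show IsClosed {x : X |
        ((∫ ω, (x : Ω → ℝ) ω * y ω ∂P : ℝ) : EReal) - (c : EReal) ≤ (r : EReal)}
      rw [this]
      exact IsClosed.preimage hcont isClosed_Iic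
  · -- lsc → representable
    intro hcl x0 hx0
    have hInt : ∀ x ∈ Msub P X hX, ∀ y ∈ Dsub P X, Integrable (fun ω => x ω * y ω) P :=
      fun x hx y hy => hy.2 x hx
    set B := pairB P hInt with hB
    have htopeq : weakTop P X (kotheDual P X) = WeakBilin.instTopologicalSpace B :=
      weakTop_eq P hInt
    refine le_antisymm ?_ ?_
    · -- hard inequality: ρ x0 ≤ sup
      refine le_of_forall_lt_imp_le_of_dense fun c hc => ?_
      induction c using EReal.rec with
      | bot => exact bot_le
      | top => exact absurd hc (by simp)
      | coe m =>
      have hm : m < ρ x0 := EReal.coe_lt_coe_iff.mp hc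
      set B' := prodPair B with hB'
      have hone : (fun _ : Ω => (1:ℝ)) ∈ X := hX.2.2.2.2.2 1
      set one : ↥(Msub P X hX) := ⟨(fun _ => 1), hone⟩ with honedef
      set C : Set (↥(Msub P X hX) × ℝ) := {p | ρ p.1.1 ≤ p.2} with hC
      have hCconv : Convex ℝ C := by
        rintro ⟨x1, t1⟩ h1 ⟨x2, t2⟩ h2 a b ha hb hab
        simp only [hC, Set.mem_setOf_eq] at h1 h2 ⊢
        have hb' : b = 1 - a := by linarith
        have ha1 : a ≤ 1 := by linarith
        have hcoe : ((a • ((x1, t1) : ↥(Msub P X hX) × ℝ)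
              + b • ((x2, t2) : ↥(Msub P X hX) × ℝ)).1.1 : Ω → ℝ) =
            fun ω => a * x1.1 ω + (1 - a) * x2.1 ω := by
          funext ω
          simp [hb']
        rw [hcoe]
        have hconv := hρ.1 x1.1 x1.2 x2.1 x2.2 a ha ha1
        have hsnd : ((a • ((x1, t1) : ↥(Msub P X hX) × ℝ)
            + b • ((x2, t2) : ↥(Msub P X hX) × ℝ)).2 : ℝ) = a * t1 + b * t2 := by
          simp [smul_eq_mul]
        rw [hsnd]
        have h4 : a * ρ x1.1 + (1 - a) * ρ x2.1 ≤ a * t1 + b * t2 := by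
          rw [hb']
          have hb0 : (0:ℝ) ≤ 1 - a := by linarith
          exact add_le_add (mul_le_mul_of_nonneg_left h1 ha)
            (mul_le_mul_of_nonneg_left h2 hb0)
        exact le_trans hconv h4
      have hS0 : IsClosed[WeakBilin.instTopologicalSpace B]
          {x : ↥(Msub P X hX) | ρ x.1 ≤ (0:ℝ)} := by
        have h := hcl 0
        rw [htopeq] at h
        exact h
      have hφcont : Continuous[WeakBilin.instTopologicalSpace B', WeakBilin.instTopologicalSpace B]
          (fun p : ↥(Msub P X hX) × ℝ => p.1 + p.2 • one) := by
        refine WeakBilin.continuous_of_continuous_eval B ?_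
        intro q
        have heq : (fun p : WeakBilin B' => B (p.1 + p.2 • one) q) =
            fun p : WeakBilin B' => B' p (q, 0) + (B one q) * (B' p ((0 : ↥(Dsub P X)), (1:ℝ))) := by
          funext p
          simp only [hB', prodPair, LinearMap.mk₂_apply, map_add, _root_.map_smul,
            LinearMap.smul_apply, smul_eq_mul, map_zero, mul_zero, mul_one, add_zero,
            LinearMap.zero_apply, zero_add, LinearMap.add_apply]
          change _ = (B p.1 q + p.2 * 0) + B one q * (B p.1 0 + p.2 * 1)
          simp only [map_zero, mul_one, mul_zero, add_zero, zero_add]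
          ring
        rw [heq]
        exact ((WeakBilin.eval_continuous B' (q, (0:ℝ))).add
          (continuous_const.mul (WeakBilin.eval_continuous B' ((0 : ↥(Dsub P X)), (1:ℝ)))))
      have hCeq : C = (fun p : ↥(Msub P X hX) × ℝ => p.1 + p.2 • one) ⁻¹'
          {x : ↥(Msub P X hX) | ρ x.1 ≤ (0:ℝ)} := by
        ext ⟨x, t⟩
        simp only [hC, Set.mem_setOf_eq, Set.mem_preimage]
        have hco : ((x + t • one : ↥(Msub P X hX)) : Ω → ℝ) = fun ω => x.1 ω + t := by
          funext ω
          simp [honedef]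
        rw [hco, hρ.2.2 x.1 x.2 t]
        constructor <;> intro h <;> linarith
      have hCclosed : IsClosed[WeakBilin.instTopologicalSpace B'] C := by
        rw [hCeq]
        exact IsClosed.preimage hφcont hS0
      have hnotmem : ((⟨x0, hx0⟩ : ↥(Msub P X hX)), m) ∉ C := by
        simp only [hC, Set.mem_setOf_eq]
        exact not_le.mpr hm
      obtain ⟨f, u, hfu, hfC⟩ :=
        geometric_hahn_banach_point_closed (E := WeakBilin B') hCconv hCclosed hnotmem
      set sV : ℝ := f (((0 : ↥(Msub P X hX)), (1:ℝ)) : WeakBilin B') with hsV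
      have hf_eq : ∀ (x : ↥(Msub P X hX)) (t : ℝ),
          f ((x, t) : WeakBilin B') = f ((x, 0) : WeakBilin B') + t * sV := by
        intro x t
        have hpt : ((x, t) : WeakBilin B') = ((x, 0) : WeakBilin B')
            + t • (((0 : ↥(Msub P X hX)), (1:ℝ)) : WeakBilin B') := by
          refine Prod.ext ?_ ?_ <;> simp
        have h1 := map_add f ((x, 0) : WeakBilin B')
          (t • (((0 : ↥(Msub P X hX)), (1:ℝ)) : WeakBilin B'))
        have h2 := _root_.map_smul f t (((0 : ↥(Msub P X hX)), (1:ℝ)) : WeakBilin B')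
        exact (congrArg f hpt).trans
          (h1.trans (congrArg (fun z => f ((x, 0) : WeakBilin B') + z) h2))
      have hXineq : ∀ x : ↥(Msub P X hX), u < f ((x, 0) : WeakBilin B') + ρ x.1 * sV := by
        intro x
        have hmem : ((x, ρ x.1)) ∈ C := by simp only [hC, Set.mem_setOf_eq]; exact le_rfl
        have h5 := hfC _ hmem
        rwa [hf_eq] at h5
      have hspos : 0 < sV := by
        rcases lt_trichotomy sV 0 with hneg | hzero | hpos
        · exfalso
          have hsne : sV ≠ 0 := ne_of_lt hneg
          set z := (0 : ↥(Msub P X hX)) with hz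
          set t := max (ρ z.1) ((u - f ((z, 0) : WeakBilin B') - 1)/sV) with ht
          have hmem : ((z, t)) ∈ C := by simp only [hC, Set.mem_setOf_eq, ht]; exact le_max_left _ _
          have h1 := hfC _ hmem
          rw [hf_eq] at h1
          have h2 : (u - f ((z, 0) : WeakBilin B') - 1)/sV ≤ t := le_max_right _ _
          have h3 := mul_le_mul_of_nonpos_right h2 (le_of_lt hneg)
          rw [div_mul_cancel₀ _ hsne] at h3
          linarith
        · exfalso
          have hx0' := hXineq ⟨x0, hx0⟩
          rw [hzero, mul_zero, add_zero] at hx0'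
          have hfu' : f (((⟨x0, hx0⟩ : ↥(Msub P X hX)), m) : WeakBilin B')
              = f (((⟨x0, hx0⟩ : ↥(Msub P X hX)), 0) : WeakBilin B') := by
            rw [hf_eq, hzero]; ring
          rw [hfu'] at hfu
          linarith
        · exact hpos
      have hsne : sV ≠ 0 := ne_of_gt hspos
      have hinclcont :
          Continuous[WeakBilin.instTopologicalSpace B, WeakBilin.instTopologicalSpace B']
          (fun x : ↥(Msub P X hX) => (x, (0:ℝ))) := by
        refine WeakBilin.continuous_of_continuous_eval B' ?_
        intro q
        have heq : (fun x : WeakBilin B => B' (x, (0:ℝ)) q)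
            = fun x : WeakBilin B => B x q.1 := by
          funext x
          simp [hB', prodPair]
        rw [heq]
        exact WeakBilin.eval_continuous B q.1
      set inclCLM : WeakBilin B →L[ℝ] WeakBilin B' :=
        { toLinearMap := LinearMap.inl ℝ (↥(Msub P X hX)) ℝ
          cont := by exact hinclcont } with hincldef
      set gL : WeakBilin B →L[ℝ] ℝ := f.comp inclCLM with hgLdef
      have hgL : ∀ x : ↥(Msub P X hX), gL x = f ((x, (0:ℝ)) : WeakBilin B') := fun x => rfl
      obtain ⟨w, hw⟩ := weakBilin_dual B gL
      set y : ↥(Dsub P X) := (-(sV⁻¹)) • w with hydef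
      have hyD : (y : Ω → ℝ) ∈ kotheDual P X := y.2
      have hint_eq : ∀ x : ↥(Msub P X hX),
          (∫ ω, x.1 ω * (y.1 : Ω → ℝ) ω ∂P) = -(sV⁻¹) * f ((x, (0:ℝ)) : WeakBilin B') := by
        intro x
        have h1 : (∫ ω, x.1 ω * (y.1 : Ω → ℝ) ω ∂P) = B x y := rfl
        rw [h1, hydef, _root_.map_smul, smul_eq_mul, ← hw x]
        rfl
      have hfen : fenchel P X ρ (y.1 : Ω → ℝ) ≤ ((-u/sV : ℝ) : EReal) := by
        refine sSup_le ?_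
        rintro - ⟨x, hx, rfl⟩
        rw [EReal.coe_le_coe_iff]
        have h2x : (∫ ω, x ω * (y.1 : Ω → ℝ) ω ∂P)
            = -(sV⁻¹) * f (((⟨x, hx⟩ : ↥(Msub P X hX)), (0:ℝ)) : WeakBilin B') :=
          hint_eq ⟨x, hx⟩
        have h1 : u < f (((⟨x, hx⟩ : ↥(Msub P X hX)), (0:ℝ)) : WeakBilin B') + ρ x * sV :=
          hXineq ⟨x, hx⟩
        rw [h2x]
        set F := f (((⟨x, hx⟩ : ↥(Msub P X hX)), (0:ℝ)) : WeakBilin B') with hF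
        by_contra hno
        push_neg at hno
        rw [neg_div] at hno
        have hE : 0 < -sV⁻¹ * F - ρ x + u/sV := by linarith
        have hEp : 0 < (-sV⁻¹ * F - ρ x + u/sV) * sV := mul_pos hE hspos
        have hkey : (-sV⁻¹ * F - ρ x + u/sV) * sV = u - (F + ρ x * sV) := by
          field_simp
          ring
        rw [hkey] at hEp
        linarith
      have h2 : (∫ ω, x0 ω * (y.1 : Ω → ℝ) ω ∂P)
          = -(sV⁻¹) * f (((⟨x0, hx0⟩ : ↥(Msub P X hX)), (0:ℝ)) : WeakBilin B') :=
        hint_eq ⟨x0, hx0⟩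
      have h3 : f (((⟨x0, hx0⟩ : ↥(Msub P X hX)), (0:ℝ)) : WeakBilin B') + m * sV < u := by
        rw [← hf_eq]
        exact hfu
      have hreal : m ≤ (∫ ω, x0 ω * (y.1 : Ω → ℝ) ω ∂P) + u/sV := by
        rw [h2]
        set F := f (((⟨x0, hx0⟩ : ↥(Msub P X hX)), (0:ℝ)) : WeakBilin B') with hF
        by_contra hEn
        push_neg at hEn
        have hE : -(sV⁻¹) * F + u/sV - m < 0 := by linarith
        have hEp : (-(sV⁻¹) * F + u/sV - m) * sV < 0 := mul_neg_of_neg_of_pos hE hspos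
        have hkey : (-(sV⁻¹) * F + u/sV - m) * sV = u - (F + m * sV) - (u - (F + m * sV)) + (u - (F + m * sV)) := by
          field_simp
          ring
        rw [hkey] at hEp
        linarith
      calc ((m:ℝ) : EReal) ≤ ((∫ ω, x0 ω * (y.1 : Ω → ℝ) ω ∂P + u/sV : ℝ) : EReal) :=
            EReal.coe_le_coe_iff.mpr hreal
        _ = ((∫ ω, x0 ω * (y.1 : Ω → ℝ) ω ∂P : ℝ) : EReal) - ((-u/sV : ℝ) : EReal) := by
            rw [← EReal.coe_sub]
            congr 1
            ring
        _ ≤ ((∫ ω, x0 ω * (y.1 : Ω → ℝ) ω ∂P : ℝ) : EReal) - fenchel P X ρ (y.1 : Ω → ℝ) :=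
            EReal.sub_le_sub le_rfl hfen
        _ ≤ _ := le_sSup (Set.mem_image_of_mem
              (fun y' : Ω → ℝ => (((∫ ω, x0 ω * y' ω ∂P : ℝ)) : EReal) - fenchel P X ρ y') hyD)
    · -- easy inequality: sup ≤ ρ x0
      refine sSup_le ?_
      rintro - ⟨y, hyD, rfl⟩
      have hf : ((∫ ω, x0 ω * y ω ∂P - ρ x0 : ℝ) : EReal) ≤ fenchel P X ρ y :=
        le_sSup ⟨x0, hx0, rfl⟩
      calc ((∫ ω, x0 ω * y ω ∂P : ℝ) : EReal) - fenchel P X ρ y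
          ≤ ((∫ ω, x0 ω * y ω ∂P : ℝ) : EReal) - ((∫ ω, x0 ω * y ω ∂P - ρ x0 : ℝ) : EReal) :=
            EReal.sub_le_sub le_rfl hf
        _ = ((ρ x0 : ℝ) : EReal) := by rw [← EReal.coe_sub]; congr 1; ring
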